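/- Let a_n → 0 be a sequence of nonnegative reals and let r_n → ∞ be any sequence of positive reals. Then there exists a continuous, strictly increasing function q : ℝ≥0 → ℝ≥0 with q(0) = 0 and q(t) > 0 for t > 0 such that r_n · q(a_n) → 0. -/
import Mathlib


open Filter

/-- For any null sequence `a_n ≥ 0` and any rate `r_n → ∞` there is a continuous,
strictly increasing `q : ℝ≥0 → ℝ≥0` with `q 0 = 0`, `q t > 0` for `t > 0`, such that
`r_n · q(a_n) → 0`. -/
theorem stmt_6 (a : ℕ → ℝ) (ha_nonneg : ∀ n, 0 ≤ a n)
    (ha : Tendsto a atTop (nhds 0))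
    (r : ℕ → ℝ) (hr_pos : ∀ n, 0 < r n)
    (hr : Tendsto r atTop atTop) :
    ∃ q : ℝ → ℝ,
      ContinuousOn q (Set.Ici 0) ∧
      StrictMonoOn q (Set.Ici 0) ∧
      q 0 = 0 ∧
      (∀ t, 0 < t → 0 < q t) ∧
      (∀ t, 0 ≤ t → 0 ≤ q t) ∧
      Tendsto (fun n => r n * q (a n)) atTop (nhds 0) := by
  classical
  -- the "worst rate" at scale t
  set S : ℝ → ℝ := fun t => sSup (insert 0 (r '' {n | t ≤ a n})) with hS_def
  have hfin : ∀ t : ℝ, 0 < t → ({n | t ≤ a n} : Set ℕ).Finite := by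
    intro t ht
    have h := ha.eventually_lt_const ht
    rw [eventually_atTop] at h
    obtain ⟨N, hN⟩ := h
    refine (Set.finite_Iio N).subset ?_
    intro n hn
    by_contra hlt
    exact absurd (hN n (le_of_not_gt hlt)) (not_lt.mpr hn)
  have hbdd : ∀ t : ℝ, 0 < t → BddAbove (insert 0 (r '' {n | t ≤ a n})) := by
    intro t ht
    exact (((hfin t ht).image r).insert 0).bddAbove
  have hS_nonneg : ∀ t : ℝ, 0 < t → 0 ≤ S t := by
    intro t ht
    exact le_csSup (hbdd t ht) (Set.mem_insert 0 _)
  have hS_anti : ∀ u v : ℝ, 0 < u → u ≤ v → S v ≤ S u := by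
    intro u v hu huv
    refine csSup_le_csSup (hbdd u hu) ⟨0, Set.mem_insert 0 _⟩ ?_
    refine Set.insert_subset_insert (Set.image_mono ?_)
    intro n hn
    exact le_trans huv hn
  have hS_ge : ∀ n : ℕ, 0 < a n → r n ≤ S (a n) := by
    intro n hn
    exact le_csSup (hbdd _ hn) (Set.mem_insert_of_mem _ ⟨n, show a n ≤ a n from le_rfl, rfl⟩)
  -- the monotone minorant
  set g : ℝ → ℝ := fun t => if t ≤ 0 then t else t / (1 + S t) with hg_def
  have hg_pos : ∀ t : ℝ, 0 < t → 0 < g t := by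
    intro t ht
    simp only [hg_def, if_neg (not_le.mpr ht)]
    exact div_pos ht (by linarith [hS_nonneg t ht])
  have hg_le : ∀ t : ℝ, 0 ≤ t → g t ≤ t := by
    intro t ht
    rcases eq_or_lt_of_le ht with h | h
    · simp [hg_def, ← h]
    · simp only [hg_def, if_neg (not_le.mpr h)]
      rw [div_le_iff₀ (by linarith [hS_nonneg t h])]
      nlinarith [hS_nonneg t h]
  have hg_strict : ∀ u v : ℝ, 0 ≤ u → u < v → g u < g v := by
    intro u v hu huv
    rcases eq_or_lt_of_le hu with h | h
    · have : g u = 0 := by simp [hg_def, ← h]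
      rw [this]; exact hg_pos v (h ▸ huv)
    · have hv : 0 < v := lt_trans h huv
      simp only [hg_def, if_neg (not_le.mpr h), if_neg (not_le.mpr hv)]
      have h1 : (0:ℝ) < 1 + S u := by linarith [hS_nonneg u h]
      have h2 : (0:ℝ) < 1 + S v := by linarith [hS_nonneg v hv]
      rw [div_lt_div_iff₀ h1 h2]
      nlinarith [hS_anti u v h huv.le]
  have hg_mono : Monotone g := by
    intro u v huv
    rcases le_or_gt v 0 with hv | hv
    · simp only [hg_def, if_pos (le_trans huv hv), if_pos hv]; exact huv
    · rcases le_or_gt u 0 with hu | hu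
      · simp only [hg_def, if_pos hu]
        exact le_trans hu (hg_pos v hv).le
      · rcases eq_or_lt_of_le huv with h | h
        · rw [h]
        · exact (hg_strict u v hu.le h).le
  have hgi : ∀ x y : ℝ, IntervalIntegrable g MeasureTheory.volume x y :=
    fun x y => hg_mono.intervalIntegrable
  set F : ℝ → ℝ := fun t => ∫ u in (0:ℝ)..t, g u with hF_def
  have hF_cont : Continuous F := intervalIntegral.continuous_primitive hgi 0
  have hg_nonneg : ∀ t : ℝ, 0 ≤ t → 0 ≤ g t := by
    intro t ht
    rcases eq_or_lt_of_le ht with h | h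
    · simp [hg_def, ← h]
    · exact (hg_pos t h).le
  have hF_nonneg : ∀ t : ℝ, 0 ≤ t → 0 ≤ F t := by
    intro t ht
    exact intervalIntegral.integral_nonneg ht (fun u hu => hg_nonneg u hu.1)
  -- F t ≤ t * g t  (average ≤ value)
  have hF_le : ∀ t : ℝ, 0 ≤ t → F t ≤ t * g t := by
    intro t ht
    have : F t ≤ ∫ _ in (0:ℝ)..t, g t := by
      refine intervalIntegral.integral_mono_on ht (hgi 0 t)
        intervalIntegrable_const (fun u hu => hg_mono hu.2)
    simpa using this.trans_eq (by simp [smul_eq_mul])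
  -- lower bound on increments: for 0 ≤ x < y, (y - x) * g x < F y - F x
  have hF_gain : ∀ x y : ℝ, 0 ≤ x → x < y → (y - x) * g x < F y - F x := by
    intro x y hx hxy
    set m : ℝ := (x + y) / 2 with hm
    have hxm : x < m := by rw [hm]; linarith
    have hmy : m < y := by rw [hm]; linarith
    have hsplit : F x + ∫ u in x..y, g u = F y :=
      intervalIntegral.integral_add_adjacent_intervals (hgi 0 x) (hgi x y)
    have hsplit2 : (∫ u in x..m, g u) + ∫ u in m..y, g u = ∫ u in x..y, g u :=
      intervalIntegral.integral_add_adjacent_intervals (hgi x m) (hgi m y)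
    have h1 : (m - x) * g x ≤ ∫ u in x..m, g u := by
      have : (∫ _ in x..m, g x) ≤ ∫ u in x..m, g u :=
        intervalIntegral.integral_mono_on hxm.le intervalIntegrable_const (hgi x m)
          (fun u hu => hg_mono hu.1)
      simpa [smul_eq_mul] using this
    have h2 : (y - m) * g m ≤ ∫ u in m..y, g u := by
      have : (∫ _ in m..y, g m) ≤ ∫ u in m..y, g u :=
        intervalIntegral.integral_mono_on hmy.le intervalIntegrable_const (hgi m y)
          (fun u hu => hg_mono hu.1)
      simpa [smul_eq_mul] using this
    have hgm : g x < g m := hg_strict x m hx hxm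
    nlinarith [h1, h2, hsplit, hsplit2]
  -- the function q
  refine ⟨fun t => F t / t, ?_, ?_, by simp, ?_, ?_, ?_⟩
  · -- continuity
    intro t ht
    rcases eq_or_lt_of_le (Set.mem_Ici.mp ht) with h | h
    · -- at 0, squeeze
      rw [← h]
      have hub : ∀ s : ℝ, 0 ≤ s → F s / s ≤ s := by
        intro s hs
        rcases eq_or_lt_of_le hs with h' | h'
        · simp [← h']
        · rw [div_le_iff₀ h']
          calc F s ≤ s * g s := hF_le s hs
            _ ≤ s * s := by nlinarith [hg_le s hs]
      have hlb : ∀ s : ℝ, 0 ≤ s → 0 ≤ F s / s := fun s hs =>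
        div_nonneg (hF_nonneg s hs) hs
      have : Tendsto (fun s => F s / s) (nhdsWithin 0 (Set.Ici 0)) (nhds 0) := by
        refine squeeze_zero' (g := fun s => s) ?_ ?_ ?_
        · exact eventually_nhdsWithin_of_forall (fun s hs => hlb s hs)
        · exact eventually_nhdsWithin_of_forall (fun s hs => hub s hs)
        · exact tendsto_id.mono_left nhdsWithin_le_nhds
      simpa [ContinuousWithinAt] using this
    · exact (hF_cont.continuousAt.continuousWithinAt.div
        continuousWithinAt_id (ne_of_gt h))
  · -- strict monotonicity
    intro x hx y hy hxy
    simp only [Set.mem_Ici] at hx hy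
    rcases eq_or_lt_of_le hx with h | h
    · rw [← h]
      simp only [div_zero]
      have hy' : 0 < y := h ▸ hxy
      have := hF_gain 0 y le_rfl hy'
      have hF0 : F 0 = 0 := by simp [hF_def]
      have hgy0 : g 0 = 0 := by simp [hg_def]
      rw [hF0, hgy0] at this
      have : 0 < F y := by nlinarith
      positivity
    · have hy' : 0 < y := lt_trans h hxy
      rw [div_lt_div_iff₀ h hy']
      have h1 := hF_gain x y h.le hxy
      have h2 := hF_le x h.le
      nlinarith [hg_pos x h, hF_nonneg x h.le]
  · -- positivity
    intro t ht
    have := hF_gain 0 t le_rfl ht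
    have hF0 : F 0 = 0 := by simp [hF_def]
    have hg0 : g 0 = 0 := by simp [hg_def]
    rw [hF0, hg0] at this
    have : 0 < F t := by nlinarith
    positivity
  · -- nonnegativity
    intro t ht
    exact div_nonneg (hF_nonneg t ht) ht
  · -- the key convergence
    have key : ∀ n, r n * (F (a n) / a n) ≤ a n := by
      intro n
      rcases eq_or_lt_of_le (ha_nonneg n) with h | h
      · simp [← h]
      · have hS := hS_ge n h
        have h1 : (0:ℝ) < 1 + S (a n) := by linarith [hS_nonneg _ h]
        have hq : F (a n) / a n ≤ g (a n) := by
          rw [div_le_iff₀ h]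
          have := hF_le (a n) h.le
          linarith [this, mul_comm (a n) (g (a n))]
        have hgval : g (a n) = a n / (1 + S (a n)) := by
          simp [hg_def, if_neg (not_le.mpr h)]
        have h2 : r n * g (a n) ≤ a n := by
          rw [hgval, mul_div_assoc']
          rw [div_le_iff₀ h1]
          nlinarith [hr_pos n, hS]
        calc r n * (F (a n) / a n) ≤ r n * g (a n) :=
              mul_le_mul_of_nonneg_left hq (hr_pos n).le
          _ ≤ a n := h2
    refine squeeze_zero (fun n => ?_) key ha
    exact mul_nonneg (hr_pos n).le (div_nonneg (hF_nonneg _ (ha_nonneg n)) (ha_nonneg n))
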